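/- If the beliefs Π satisfy weak convex independence, then weak full extraction holds: for every value function v : T → ℝ there exists a menu c : T → ℝ^S achieving weak full extraction for (Π, v). -/
import Mathlib


noncomputable section

/-- Euclidean inner product on ℝ^S. -/
def dotp {S : Type*} [Fintype S] (x y : S → ℝ) : ℝ := ∑ s, x s * y s

theorem stmt_0 {S T : Type*} [Fintype S] [Fintype T] [Nonempty S] [Nonempty T]
    (P : T → Set (S → ℝ))
    (hne : ∀ t, (P t).Nonempty) (hcl : ∀ t, IsClosed (P t))
    (hcv : ∀ t, Convex ℝ (P t)) (hsub : ∀ t, P t ⊆ stdSimplex ℝ S)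
    (hwci : ∃ p : T → (S → ℝ), (∀ t, p t ∈ P t) ∧
      ∀ t, p t ∉ closure (convexHull ℝ (p '' {s | s ≠ t})))
    (v : T → ℝ) :
    ∃ c : T → (S → ℝ), ∀ t : T, ∃ π ∈ P t,
      dotp π (c t) = v t ∧ ∀ s, s ≠ t → v t ≤ dotp π (c s) := by
  classical
  obtain ⟨p, hp, hsep⟩ := hwci
  choose f u hfu hfb using fun t =>
    geometric_hahn_banach_point_closed ((convex_convexHull ℝ _).closure)
      isClosed_closure (hsep t)
  set δ : T → ℝ := fun t => u t - f t (p t) with hδ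
  have hδpos : ∀ t, 0 < δ t := fun t => sub_pos.mpr (hfu t)
  have hgap : ∀ s t : T, s ≠ t → δ s < f s (p t) - f s (p s) := by
    intro s t hst
    have hmem : p t ∈ closure (convexHull ℝ (p '' {s' | s' ≠ s})) :=
      subset_closure (subset_convexHull ℝ _ ⟨t, hst.symm, rfl⟩)
    have := hfb s _ hmem
    simp only [hδ]
    linarith
  set lam : T → ℝ := fun s =>
    (Finset.univ.sup' Finset.univ_nonempty (fun t => (v t - v s) / δ s)) ⊔ 0 with hlam
  have hlam0 : ∀ s, 0 ≤ lam s := fun s => le_sup_right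
  have hlamle : ∀ s t, v t - v s ≤ lam s * δ s := by
    intro s t
    have h1 : (v t - v s) / δ s ≤ lam s :=
      le_trans (Finset.le_sup' (fun t => (v t - v s) / δ s) (Finset.mem_univ t)) le_sup_left
    calc v t - v s = (v t - v s) / δ s * δ s :=
          (div_mul_cancel₀ _ (hδpos s).ne').symm
      _ ≤ lam s * δ s := mul_le_mul_of_nonneg_right h1 (hδpos s).le
  set c : T → (S → ℝ) := fun s i =>
    v s + lam s * (f s (fun j => if i = j then (1:ℝ) else 0) - f s (p s)) with hc
  have hdot : ∀ t s : T, dotp (p t) (c s) = v s + lam s * (f s (p t) - f s (p s)) := by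
    intro t s
    have hsum1 : ∑ i, p t i = 1 := (hsub t (hp t)).2
    have hfp : ∑ i, p t i * f s (fun j => if i = j then (1:ℝ) else 0) = f s (p t) := by
      conv_rhs => rw [pi_eq_sum_univ (p t)]
      rw [map_sum]
      exact Finset.sum_congr rfl (fun i _ => by rw [map_smul]; rfl)
    have hexp : ∀ i, p t i * (v s + lam s * (f s (fun j => if i = j then (1:ℝ) else 0) - f s (p s)))
        = v s * p t i + lam s * (p t i * f s (fun j => if i = j then (1:ℝ) else 0))
          - (lam s * f s (p s)) * p t i := by
      intro i; ring
    simp only [dotp, hc]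
    rw [Finset.sum_congr rfl (fun i _ => hexp i), Finset.sum_sub_distrib,
      Finset.sum_add_distrib, ← Finset.mul_sum, ← Finset.mul_sum, ← Finset.mul_sum,
      hfp, hsum1]
    ring
  refine ⟨c, fun t => ⟨p t, hp t, ?_, ?_⟩⟩
  · rw [hdot t t]; ring
  · intro s hst
    rw [hdot t s]
    have h1 : lam s * δ s ≤ lam s * (f s (p t) - f s (p s)) :=
      mul_le_mul_of_nonneg_left (hgap s t hst).le (hlam0 s)
    have h2 := hlamle s t
    linarith
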